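/- For every unweighted finite multi-hypergraph H = (V, E) in which every hyperedge has at least 2 vertices, there exists a 1-balanced weight assignment w^F : F → ℝ_{≥0}; that is, an assignment with Σ_{f ∈ F_e} w^F(f) = 1 for every e ∈ E such that all positive-weight edges of the clique F_e have strength exactly κ_e in G = (V, F, w^F). -/

import Mathlib

open Finset
open scoped Classical

/-- An edge `f` crosses the cut `S` if exactly one of its endpoints lies in `S`. -/
def crossesCut {V F : Type} (ep : F → V × V) (S : Finset V) (f : F) : Prop :=
  ((ep f).1 ∈ S ∧ (ep f).2 ∉ S) ∨ ((ep f).1 ∉ S ∧ (ep f).2 ∈ S)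

/-- Total weight of edges of the induced subgraph `G[X]` crossing the cut `S`. -/
noncomputable def cutWt {V F : Type} [Fintype F] (ep : F → V × V) (w : F → ℝ)
    (X S : Finset V) : ℝ :=
  ∑ f : F, if (ep f).1 ∈ X ∧ (ep f).2 ∈ X ∧ crossesCut ep S f then w f else 0

/-- The min-cut of the induced subgraph `G[X]`: the least total weight of edges of `G[X]`
crossing a cut `(S, X \ S)` with `∅ ⊊ S ⊊ X`. -/
noncomputable def minCutIn {V F : Type} [Fintype F] (ep : F → V × V) (w : F → ℝ)
    (X : Finset V) : ℝ :=
  sInf {c : ℝ | ∃ S : Finset V, S ⊆ X ∧ S.Nonempty ∧ S ≠ X ∧ c = cutWt ep w X S}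

/-- The strength of an edge `f`: the maximum of the min-cut of `G[X]` over all vertex
sets `X` containing both endpoints of `f`. -/
noncomputable def strength {V F : Type} [Fintype V] [Fintype F] (ep : F → V × V)
    (w : F → ℝ) (f : F) : ℝ :=
  sSup {c : ℝ | ∃ X : Finset V, (ep f).1 ∈ X ∧ (ep f).2 ∈ X ∧ c = minCutIn ep w X}


/-- A hyperedge `e` crosses the cut `S` if it has at least one vertex in `S` and at least
one vertex outside `S`. -/
def hCrosses {V E : Type} (he : E → Finset V) (S : Finset V) (e : E) : Prop :=
  ((he e) ∩ S).Nonempty ∧ ((he e) \ S).Nonempty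

/-- The (multiset) union over the hyperedges `e` of the edge set `F_e` of the clique on the
vertex set of `e`: an element records the hyperedge `e` and an unordered pair of distinct
vertices of `e` (normalized so that the first vertex is smaller). -/
abbrev CliqueEdges {V E : Type} [LinearOrder V] (he : E → Finset V) : Type :=
  {p : E × V × V // p.2.1 ∈ he p.1 ∧ p.2.2 ∈ he p.1 ∧ p.2.1 < p.2.2}

/-- The endpoints of a clique edge. -/
def cep {V E : Type} [LinearOrder V] (he : E → Finset V) : CliqueEdges he → V × V :=
  fun f => f.1.2

/-- `κ_e`: the minimum strength of an edge of the clique `F_e` in the auxiliary graph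
`G = (V, F, w)`. -/
noncomputable def kappa {V E : Type} [Fintype V] [LinearOrder V] [Fintype E]
    (he : E → Finset V) (w : CliqueEdges he → ℝ) (e : E) : ℝ :=
  sInf {c : ℝ | ∃ f : CliqueEdges he, f.1.1 = e ∧ c = strength (cep he) w f}

/-- `κ_e^max`: the maximum strength of a positive-weight edge of the clique `F_e` in the
auxiliary graph `G = (V, F, w)`. -/
noncomputable def kappaMax {V E : Type} [Fintype V] [LinearOrder V] [Fintype E]
    (he : E → Finset V) (w : CliqueEdges he → ℝ) (e : E) : ℝ :=
  sSup {c : ℝ | ∃ f : CliqueEdges he, f.1.1 = e ∧ 0 < w f ∧ c = strength (cep he) w f}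

/-- A weight assignment `w : F → ℝ≥0` is `γ`-balanced if for each hyperedge `e` the weights of
the clique `F_e` sum to `1` and `κ_e^max ≤ γ·κ_e`. -/
def BalancedAssignment {V E : Type} [Fintype V] [LinearOrder V] [Fintype E]
    (he : E → Finset V) (w : CliqueEdges he → ℝ) (γ : ℝ) : Prop :=
  ∀ e : E, (∑ f : CliqueEdges he, if f.1.1 = e then w f else 0) = 1 ∧
    kappaMax he w e ≤ γ * kappa he w e



open Topology Filter

namespace Bal

variable {V F : Type} [Fintype V] [Fintype F] (ep : F → V × V)

/-- The candidate cuts of `G[X]`. -/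
noncomputable def cutsOf (X : Finset V) : Finset (Finset V) :=
  (univ : Finset (Finset V)).filter (fun S => S ⊆ X ∧ S.Nonempty ∧ S ≠ X)

lemma minCutIn_set_eq (w : F → ℝ) (X : Finset V) :
    {c : ℝ | ∃ S : Finset V, S ⊆ X ∧ S.Nonempty ∧ S ≠ X ∧ c = cutWt ep w X S}
      = ↑((cutsOf (V := V) X).image (cutWt ep w X)) := by
  ext c
  simp only [Set.mem_setOf_eq, coe_image, Set.mem_image, mem_coe, cutsOf, mem_filter,
    mem_univ, true_and]
  constructor
  · rintro ⟨S, h1, h2, h3, h4⟩; exact ⟨S, ⟨h1, h2, h3⟩, h4.symm⟩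
  · rintro ⟨S, ⟨h1, h2, h3⟩, h4⟩; exact ⟨S, h1, h2, h3, h4.symm⟩

lemma minCutIn_le {X S : Finset V} (w : F → ℝ) (hS : S ∈ cutsOf (V := V) X) :
    minCutIn ep w X ≤ cutWt ep w X S := by
  rw [minCutIn, minCutIn_set_eq]
  exact csInf_le (Finset.bddBelow _) (by exact_mod_cast Finset.mem_image_of_mem _ hS)

lemma minCutIn_attain {X : Finset V} (w : F → ℝ) (h : (cutsOf (V := V) X).Nonempty) :
    ∃ S ∈ cutsOf (V := V) X, minCutIn ep w X = cutWt ep w X S := by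
  rw [minCutIn, minCutIn_set_eq]
  have := Finset.Nonempty.csInf_mem (s := (cutsOf (V := V) X).image (cutWt ep w X))
    (h.image _)
  rcases Finset.mem_image.1 this with ⟨S, hS, hval⟩
  exact ⟨S, hS, hval.symm⟩

lemma minCutIn_empty {X : Finset V} (w : F → ℝ) (h : ¬ (cutsOf (V := V) X).Nonempty) :
    minCutIn ep w X = 0 := by
  rw [minCutIn, minCutIn_set_eq]
  rw [Finset.not_nonempty_iff_eq_empty] at h
  simp [h, Real.sInf_empty]

/-- Candidate vertex sets for the strength of `f`. -/
noncomputable def XsOf (f : F) : Finset (Finset V) :=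
  (univ : Finset (Finset V)).filter (fun X => (ep f).1 ∈ X ∧ (ep f).2 ∈ X)

lemma XsOf_nonempty (f : F) : (XsOf ep f).Nonempty :=
  ⟨univ, by simp [XsOf]⟩

lemma strength_set_eq (w : F → ℝ) (f : F) :
    {c : ℝ | ∃ X : Finset V, (ep f).1 ∈ X ∧ (ep f).2 ∈ X ∧ c = minCutIn ep w X}
      = ↑((XsOf ep f).image (minCutIn ep w)) := by
  ext c
  simp only [Set.mem_setOf_eq, coe_image, Set.mem_image, mem_coe, XsOf, mem_filter,
    mem_univ, true_and]
  constructor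
  · rintro ⟨X, h1, h2, h3⟩; exact ⟨X, ⟨h1, h2⟩, h3.symm⟩
  · rintro ⟨X, ⟨h1, h2⟩, h3⟩; exact ⟨X, h1, h2, h3.symm⟩

lemma le_strength {X : Finset V} (w : F → ℝ) {f : F} (hX : X ∈ XsOf ep f) :
    minCutIn ep w X ≤ strength ep w f := by
  rw [strength, strength_set_eq]
  exact le_csSup (Finset.bddAbove _) (by exact_mod_cast Finset.mem_image_of_mem _ hX)

lemma strength_attain (w : F → ℝ) (f : F) :
    ∃ X ∈ XsOf ep f, strength ep w f = minCutIn ep w X := by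
  rw [strength, strength_set_eq]
  have := Finset.Nonempty.csSup_mem (s := (XsOf ep f).image (minCutIn ep w))
    ((XsOf_nonempty ep f).image _)
  rcases Finset.mem_image.1 this with ⟨X, hX, hval⟩
  exact ⟨X, hX, hval.symm⟩

/- ### monotonicity and Lipschitz bounds -/

lemma cutWt_mono {w w' : F → ℝ} (h : ∀ g, w g ≤ w' g) (X S : Finset V) :
    cutWt ep w X S ≤ cutWt ep w' X S := by
  refine Finset.sum_le_sum fun g _ => ?_
  split_ifs
  · exact h g
  · exact le_rfl

lemma cutWt_le_add {w w' : F → ℝ} (X S : Finset V) :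
    cutWt ep w' X S ≤ cutWt ep w X S + ∑ g : F, |w' g - w g| := by
  rw [cutWt, cutWt, ← Finset.sum_add_distrib]
  refine Finset.sum_le_sum fun g _ => ?_
  split_ifs
  · have := abs_nonneg (w' g - w g)
    have h2 : w' g - w g ≤ |w' g - w g| := le_abs_self _
    linarith
  · simpa using abs_nonneg (w' g - w g)

lemma minCutIn_mono {w w' : F → ℝ} (h : ∀ g, w g ≤ w' g) (X : Finset V) :
    minCutIn ep w X ≤ minCutIn ep w' X := by
  by_cases hne : (cutsOf (V := V) X).Nonempty
  · obtain ⟨S, hS, hval⟩ := minCutIn_attain ep w' hne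
    rw [hval]
    exact le_trans (minCutIn_le ep w hS) (cutWt_mono ep h X S)
  · rw [minCutIn_empty ep w hne, minCutIn_empty ep w' hne]

lemma minCutIn_le_add (w w' : F → ℝ) (X : Finset V) :
    minCutIn ep w' X ≤ minCutIn ep w X + ∑ g : F, |w' g - w g| := by
  by_cases hne : (cutsOf (V := V) X).Nonempty
  · obtain ⟨S, hS, hval⟩ := minCutIn_attain ep w hne
    rw [hval]
    exact le_trans (minCutIn_le ep w' hS) (cutWt_le_add ep X S)
  · rw [minCutIn_empty ep w hne, minCutIn_empty ep w' hne]
    positivity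

lemma strength_mono {w w' : F → ℝ} (h : ∀ g, w g ≤ w' g) (f : F) :
    strength ep w f ≤ strength ep w' f := by
  obtain ⟨X, hX, hval⟩ := strength_attain ep w f
  rw [hval]
  exact le_trans (minCutIn_mono ep h X) (le_strength ep w' hX)

lemma strength_le_add (w w' : F → ℝ) (f : F) :
    strength ep w' f ≤ strength ep w f + ∑ g : F, |w' g - w g| := by
  obtain ⟨X, hX, hval⟩ := strength_attain ep w' f
  rw [hval]
  exact le_trans (minCutIn_le_add ep w w' X)
    (by have := le_strength ep w hX; linarith)

lemma abs_strength_sub_le (w w' : F → ℝ) (f : F) :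
    |strength ep w f - strength ep w' f| ≤ ∑ g : F, |w g - w' g| := by
  rw [abs_le]
  constructor
  · have h1 := strength_le_add ep w w' f
    have h2 : ∑ g : F, |w' g - w g| = ∑ g : F, |w g - w' g| := by
      refine Finset.sum_congr rfl fun g _ => abs_sub_comm _ _
    linarith
  · have h1 := strength_le_add ep w' w f
    linarith

/- ### congruence for edges outside X -/

lemma cutWt_congr {w w' : F → ℝ} (X S : Finset V)
    (h : ∀ g, (ep g).1 ∈ X → (ep g).2 ∈ X → w g = w' g) :
    cutWt ep w X S = cutWt ep w' X S := by
  refine Finset.sum_congr rfl fun g _ => ?_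
  by_cases hc : (ep g).1 ∈ X ∧ (ep g).2 ∈ X ∧ crossesCut ep S g
  · rw [if_pos hc, if_pos hc, h g hc.1 hc.2.1]
  · rw [if_neg hc, if_neg hc]

lemma minCutIn_congr {w w' : F → ℝ} (X : Finset V)
    (h : ∀ g, (ep g).1 ∈ X → (ep g).2 ∈ X → w g = w' g) :
    minCutIn ep w X = minCutIn ep w' X := by
  rw [minCutIn, minCutIn]
  congr 1
  ext c
  constructor
  · rintro ⟨S, h1, h2, h3, h4⟩; exact ⟨S, h1, h2, h3, by rw [h4, cutWt_congr ep X S h]⟩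
  · rintro ⟨S, h1, h2, h3, h4⟩; exact ⟨S, h1, h2, h3, by rw [h4, ← cutWt_congr ep X S h]⟩

/-- **Key uncrossing fact**: if increasing only the weight of `f''` strictly increases
the strength of `g`, then the new strength of `g` is at most the new strength of `f''`. -/
lemma strength_increase_le {w w' : F → ℝ} {f'' : F}
    (hw' : ∀ g, g ≠ f'' → w' g = w g)
    {g : F} (h : strength ep w g < strength ep w' g) :
    strength ep w' g ≤ strength ep w' f'' := by
  obtain ⟨X, hX, hval⟩ := strength_attain ep w' g
  by_cases hin : (ep f'').1 ∈ X ∧ (ep f'').2 ∈ X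
  · rw [hval]
    refine le_strength ep w' ?_
    simp only [XsOf, mem_filter, mem_univ, true_and]
    exact hin
  · exfalso
    have heq : minCutIn ep w' X = minCutIn ep w X := by
      refine minCutIn_congr ep X fun g' h1 h2 => ?_
      by_cases hg' : g' = f''
      · exact absurd ⟨hg' ▸ h1, hg' ▸ h2⟩ hin
      · rw [hw' g' hg']
    have : strength ep w' g ≤ strength ep w g := by
      rw [hval, heq]
      exact le_strength ep w hX
    linarith

end Bal

namespace Bal

variable {V E : Type} [Fintype V] [LinearOrder V] [Fintype E] (he : E → Finset V)

/-- The clique edges belonging to hyperedge `e`. -/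
noncomputable def Fe (e : E) : Finset (CliqueEdges he) :=
  (univ : Finset (CliqueEdges he)).filter (fun f => f.1.1 = e)

lemma Fe_nonempty (hhe : ∀ e, 2 ≤ (he e).card) (e : E) : (Fe he e).Nonempty := by
  have h2 : 1 < (he e).card := hhe e
  rw [Finset.one_lt_card] at h2
  obtain ⟨a, ha, b, hb, hab⟩ := h2
  rcases lt_or_gt_of_ne hab with h | h
  · exact ⟨⟨⟨e, a, b⟩, ha, hb, h⟩, by simp [Fe]⟩
  · exact ⟨⟨⟨e, b, a⟩, hb, ha, h⟩, by simp [Fe]⟩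

lemma kappa_set_eq (w : CliqueEdges he → ℝ) (e : E) :
    {c : ℝ | ∃ f : CliqueEdges he, f.1.1 = e ∧ c = strength (cep he) w f}
      = ↑((Fe he e).image (strength (cep he) w)) := by
  ext c
  simp only [Set.mem_setOf_eq, coe_image, Set.mem_image, mem_coe, Fe, mem_filter,
    mem_univ, true_and]
  constructor
  · rintro ⟨f, h1, h2⟩; exact ⟨f, h1, h2.symm⟩
  · rintro ⟨f, h1, h2⟩; exact ⟨f, h1, h2.symm⟩

lemma kappa_le (w : CliqueEdges he → ℝ) {f : CliqueEdges he} {e : E} (hf : f.1.1 = e) :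
    kappa he w e ≤ strength (cep he) w f := by
  rw [kappa, kappa_set_eq]
  refine csInf_le (Finset.bddBelow _) ?_
  exact_mod_cast Finset.mem_image_of_mem _ (by simp [Fe, hf])

lemma kappa_attain (hhe : ∀ e, 2 ≤ (he e).card) (w : CliqueEdges he → ℝ) (e : E) :
    ∃ f : CliqueEdges he, f.1.1 = e ∧ kappa he w e = strength (cep he) w f := by
  rw [kappa, kappa_set_eq]
  have := Finset.Nonempty.csInf_mem (s := (Fe he e).image (strength (cep he) w))
    ((Fe_nonempty he hhe e).image _)
  rcases Finset.mem_image.1 this with ⟨f, hf, hval⟩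
  exact ⟨f, by simpa [Fe] using hf, hval.symm⟩

lemma abs_kappa_sub_le (hhe : ∀ e, 2 ≤ (he e).card) (w w' : CliqueEdges he → ℝ) (e : E) :
    |kappa he w e - kappa he w' e| ≤ ∑ g : CliqueEdges he, |w g - w' g| := by
  rw [abs_le]
  constructor
  · obtain ⟨f, hf, hval⟩ := kappa_attain he hhe w e
    have h1 := kappa_le he w' hf
    have h2 := abs_strength_sub_le (cep he) w w' f
    rw [abs_le] at h2
    linarith [h2.2]
  · obtain ⟨f, hf, hval⟩ := kappa_attain he hhe w' e
    have h1 := kappa_le he w hf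
    have h2 := abs_strength_sub_le (cep he) w w' f
    rw [abs_le] at h2
    linarith [h2.1]

/- ### continuity -/

lemma continuous_strength (f : CliqueEdges he) :
    Continuous fun w : CliqueEdges he → ℝ => strength (cep he) w f := by
  have : LipschitzWith (Fintype.card (CliqueEdges he) : NNReal)
      (fun w : CliqueEdges he → ℝ => strength (cep he) w f) := by
    refine LipschitzWith.of_dist_le_mul fun w w' => ?_
    rw [Real.dist_eq]
    refine le_trans (abs_strength_sub_le (cep he) w w' f) ?_
    calc ∑ g : CliqueEdges he, |w g - w' g|
        ≤ ∑ _g : CliqueEdges he, dist w w' := by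
          refine Finset.sum_le_sum fun g _ => ?_
          rw [← Real.dist_eq]
          exact dist_le_pi_dist w w' g
      _ = (Fintype.card (CliqueEdges he) : ℝ) * dist w w' := by
          rw [Finset.sum_const, nsmul_eq_mul]; rfl
      _ = ((Fintype.card (CliqueEdges he) : NNReal) : ℝ) * dist w w' := by norm_num
  exact this.continuous

lemma continuous_kappa (hhe : ∀ e, 2 ≤ (he e).card) (e : E) :
    Continuous fun w : CliqueEdges he → ℝ => kappa he w e := by
  have : LipschitzWith (Fintype.card (CliqueEdges he) : NNReal)
      (fun w : CliqueEdges he → ℝ => kappa he w e) := by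
    refine LipschitzWith.of_dist_le_mul fun w w' => ?_
    rw [Real.dist_eq]
    refine le_trans (abs_kappa_sub_le he hhe w w' e) ?_
    calc ∑ g : CliqueEdges he, |w g - w' g|
        ≤ ∑ _g : CliqueEdges he, dist w w' := by
          refine Finset.sum_le_sum fun g _ => ?_
          rw [← Real.dist_eq]
          exact dist_le_pi_dist w w' g
      _ = (Fintype.card (CliqueEdges he) : ℝ) * dist w w' := by
          rw [Finset.sum_const, nsmul_eq_mul]; rfl
      _ = ((Fintype.card (CliqueEdges he) : NNReal) : ℝ) * dist w w' := by norm_num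
  exact this.continuous

end Bal

namespace Bal

/-- Convexity bound: `exp y - exp x ≤ (y - x) * exp c` when `x ≤ y ≤ c`. -/
lemma exp_diff_le {x y c : ℝ} (hxy : x ≤ y) (hyc : y ≤ c) :
    Real.exp y - Real.exp x ≤ (y - x) * Real.exp c := by
  have h0 := Real.add_one_le_exp (x - y)
  have h1 : Real.exp y * (x - y + 1) ≤ Real.exp y * Real.exp (x - y) :=
    mul_le_mul_of_nonneg_left h0 (Real.exp_pos y).le
  rw [← Real.exp_add] at h1
  have h2 : y + (x - y) = x := by ring
  rw [h2] at h1
  have h3 : Real.exp y ≤ Real.exp c := Real.exp_le_exp.2 hyc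
  nlinarith [Real.exp_pos y, sub_nonneg.2 hxy]

variable {V E : Type} [Fintype V] [LinearOrder V] [Fintype E] (he : E → Finset V)

/-- The domain: nonnegative weights whose clique sums are all 1. -/
def AA : Set (CliqueEdges he → ℝ) :=
  {w | (∀ f, 0 ≤ w f) ∧
    ∀ e : E, (∑ f : CliqueEdges he, if f.1.1 = e then w f else 0) = 1}

lemma mem_AA_le_one {w : CliqueEdges he → ℝ} (hw : w ∈ AA he) (g : CliqueEdges he) :
    w g ≤ 1 := by
  have hsum := hw.2 g.1.1
  have hle : (if g.1.1 = g.1.1 then w g else 0)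
      ≤ ∑ f : CliqueEdges he, if f.1.1 = g.1.1 then w f else 0 := by
    refine Finset.single_le_sum
      (f := fun i : CliqueEdges he => if i.1.1 = g.1.1 then w i else 0)
      (fun i _ => ?_) (Finset.mem_univ g)
    split_ifs
    · exact hw.1 i
    · exact le_rfl
  rw [if_pos rfl] at hle
  linarith

/-- The potential function. -/
noncomputable def Phi (lam : ℝ) (w : CliqueEdges he → ℝ) : ℝ :=
  ∑ g : CliqueEdges he, w g * Real.exp (lam * strength (cep he) w g)

lemma continuous_Phi (lam : ℝ) : Continuous (Phi he lam) := by
  refine continuous_finset_sum _ fun g _ => ?_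
  exact (continuous_apply g).mul
    (Real.continuous_exp.comp (continuous_const.mul (continuous_strength he g)))

/-- **Main local lemma**: at a minimizer of `Phi lam` over `AA`, every positive-weight
edge has strength at most `κ + log(1 + N e λ)/λ`. -/
lemma minimizer_bound (hhe : ∀ e, 2 ≤ (he e).card) {lam : ℝ} (hlam : 1 ≤ lam)
    {w : CliqueEdges he → ℝ} (hw : w ∈ AA he)
    (hmin : ∀ u ∈ AA he, Phi he lam w ≤ Phi he lam u)
    {f : CliqueEdges he} (hwf : 0 < w f) :
    strength (cep he) w f ≤ kappa he w f.1.1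
      + Real.log (1 + (Fintype.card (CliqueEdges he) : ℝ) * Real.exp 1 * lam) / lam := by
  set N : ℝ := (Fintype.card (CliqueEdges he) : ℝ) with hN
  have hN0 : 0 ≤ N := by rw [hN]; exact Nat.cast_nonneg _
  have hlam0 : (0:ℝ) < lam := by linarith
  set ε : ℝ := Real.log (1 + N * Real.exp 1 * lam) / lam with hε
  have harg : (1:ℝ) ≤ 1 + N * Real.exp 1 * lam := by
    have hpos : (0:ℝ) ≤ N * Real.exp 1 * lam :=
      mul_nonneg (mul_nonneg hN0 (Real.exp_pos 1).le) hlam0.le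
    linarith
  have hε0 : 0 ≤ ε := div_nonneg (Real.log_nonneg harg) hlam0.le
  by_contra hcon
  push_neg at hcon
  obtain ⟨f'', hf''e, hκ⟩ := kappa_attain he hhe w f.1.1
  have hκle : kappa he w f.1.1 ≤ strength (cep he) w f := kappa_le he w rfl
  set κ : ℝ := kappa he w f.1.1 with hκdef
  have hfne : f ≠ f'' := by
    intro h
    rw [← h] at hκ
    rw [hκ] at hcon
    linarith
  set δ : ℝ := min (w f) (1/lam) with hδdef
  have hδpos : 0 < δ := lt_min hwf (one_div_pos.2 hlam0)
  have hδwf : δ ≤ w f := min_le_left _ _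
  have hδlam : lam * δ ≤ 1 := by
    have h1 : δ ≤ 1/lam := min_le_right _ _
    rw [le_div_iff₀ hlam0] at h1
    linarith [h1]
  set w1 : CliqueEdges he → ℝ := Function.update w f (w f - δ) with hw1def
  set w' : CliqueEdges he → ℝ := Function.update w1 f'' (w1 f'' + δ) with hw'def
  have hw'g : ∀ g, w' g = w g + (if g = f'' then δ else 0) - (if g = f then δ else 0) := by
    intro g
    by_cases h1 : g = f''
    · rw [if_pos h1, if_neg (by rw [h1]; exact Ne.symm hfne), hw'def, h1,
        Function.update_self, hw1def, Function.update_of_ne (Ne.symm hfne)]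
      ring
    · rw [if_neg h1, hw'def, Function.update_of_ne h1]
      by_cases h2 : g = f
      · rw [if_pos h2, hw1def, h2, Function.update_self]
        ring
      · rw [if_neg h2, hw1def, Function.update_of_ne h2]
        ring
  have hw1le : ∀ g, w1 g ≤ w g := by
    intro g
    by_cases h2 : g = f
    · rw [hw1def, h2, Function.update_self]; linarith
    · rw [hw1def, Function.update_of_ne h2]
  have hsum1 : ∑ h : CliqueEdges he, |w' h - w1 h| = δ := by
    rw [Finset.sum_eq_single f'']
    · rw [hw'def, Function.update_self, add_sub_cancel_left]
      exact abs_of_pos hδpos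
    · intro b _ hb
      rw [hw'def, Function.update_of_ne hb, sub_self, abs_zero]
    · intro h; exact absurd (Finset.mem_univ f'') h
  -- w' is in the domain
  have hw'A : w' ∈ AA he := by
    constructor
    · intro g
      rw [hw'g g]
      by_cases h1 : g = f''
      · rw [if_pos h1, if_neg (by rw [h1]; exact Ne.symm hfne)]
        have := hw.1 g; linarith
      · rw [if_neg h1]
        by_cases h2 : g = f
        · rw [if_pos h2, h2]; linarith
        · rw [if_neg h2]; have := hw.1 g; linarith
    · intro e'
      have hterm : ∀ g : CliqueEdges he,
          (if g.1.1 = e' then w' g else 0)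
            = (if g.1.1 = e' then w g else 0)
              + (if g = f'' then (if g.1.1 = e' then δ else 0) else 0)
              - (if g = f then (if g.1.1 = e' then δ else 0) else 0) := by
        intro g
        rw [hw'g g]
        split_ifs <;> ring
      rw [Finset.sum_congr rfl (fun g _ => hterm g), Finset.sum_sub_distrib,
        Finset.sum_add_distrib, Finset.sum_ite_eq' univ f''
          (fun g : CliqueEdges he => if g.1.1 = e' then δ else 0),
        Finset.sum_ite_eq' univ f
          (fun g : CliqueEdges he => if g.1.1 = e' then δ else 0),
        if_pos (Finset.mem_univ _), if_pos (Finset.mem_univ _), hw.2 e', hf''e]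
      ring
  -- per-edge exponential bound
  set B : ℝ := lam * δ * Real.exp (lam * (κ + δ)) with hB
  have hB0 : 0 ≤ B := by
    rw [hB]; exact mul_nonneg (mul_nonneg hlam0.le hδpos.le) (Real.exp_pos _).le
  have hkey : ∀ g, Real.exp (lam * strength (cep he) w' g)
      ≤ Real.exp (lam * strength (cep he) w g) + B := by
    intro g
    by_cases hg : strength (cep he) w' g ≤ strength (cep he) w g
    · have := Real.exp_le_exp.2 (mul_le_mul_of_nonneg_left hg hlam0.le)
      linarith
    · push_neg at hg
      have h1 : strength (cep he) w1 g ≤ strength (cep he) w g :=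
        strength_mono (cep he) hw1le g
      have h3 : strength (cep he) w1 g < strength (cep he) w' g := lt_of_le_of_lt h1 hg
      have h4 : strength (cep he) w' g ≤ strength (cep he) w' f'' :=
        strength_increase_le (cep he)
          (fun g hg => by rw [hw'def]; exact Function.update_of_ne hg _ _) h3
      have h5 : strength (cep he) w' f'' ≤ strength (cep he) w1 f'' + δ := by
        have := strength_le_add (cep he) w1 w' f''
        rw [hsum1] at this
        exact this
      have h6 : strength (cep he) w1 f'' ≤ κ := by
        have h := strength_mono (cep he) hw1le f''
        rw [← hκ] at h
        exact h
      have hub : strength (cep he) w' g ≤ κ + δ := by linarith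
      have h7 : strength (cep he) w' g ≤ strength (cep he) w g + δ := by
        have := strength_le_add (cep he) w1 w' g
        rw [hsum1] at this
        linarith
      have hdiff := exp_diff_le
        (mul_le_mul_of_nonneg_left hg.le hlam0.le)
        (mul_le_mul_of_nonneg_left hub hlam0.le)
      have hd1 : lam * strength (cep he) w' g - lam * strength (cep he) w g ≤ lam * δ := by
        nlinarith [h7]
      have : (lam * strength (cep he) w' g - lam * strength (cep he) w g)
            * Real.exp (lam * (κ + δ)) ≤ lam * δ * Real.exp (lam * (κ + δ)) :=
        mul_le_mul_of_nonneg_right hd1 (Real.exp_pos _).le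
      rw [hB]
      linarith
  -- assemble
  have hmin' : Phi he lam w ≤ Phi he lam w' := hmin w' hw'A
  have hΦ1 : Phi he lam w'
      ≤ (∑ g : CliqueEdges he, w' g * Real.exp (lam * strength (cep he) w g)) + N * B := by
    have hstep : Phi he lam w'
        ≤ ∑ g : CliqueEdges he, w' g * (Real.exp (lam * strength (cep he) w g) + B) := by
      refine Finset.sum_le_sum fun g _ => ?_
      exact mul_le_mul_of_nonneg_left (hkey g) (hw'A.1 g)
    have heq : ∑ g : CliqueEdges he, w' g * (Real.exp (lam * strength (cep he) w g) + B)
        = (∑ g : CliqueEdges he, w' g * Real.exp (lam * strength (cep he) w g))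
          + (∑ g : CliqueEdges he, w' g) * B := by
      rw [Finset.sum_mul, ← Finset.sum_add_distrib]
      refine Finset.sum_congr rfl fun g _ => by ring
    have hcard : (∑ g : CliqueEdges he, w' g) ≤ N := by
      calc ∑ g : CliqueEdges he, w' g ≤ ∑ _g : CliqueEdges he, (1:ℝ) :=
            Finset.sum_le_sum fun g _ => mem_AA_le_one he hw'A g
        _ = N := by rw [Finset.sum_const, nsmul_eq_mul, mul_one, Finset.card_univ, hN]
    have : (∑ g : CliqueEdges he, w' g) * B ≤ N * B :=
      mul_le_mul_of_nonneg_right hcard hB0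
    linarith
  have hΦ2 : ∑ g : CliqueEdges he, w' g * Real.exp (lam * strength (cep he) w g)
      = Phi he lam w + δ * Real.exp (lam * strength (cep he) w f'')
        - δ * Real.exp (lam * strength (cep he) w f) := by
    have hterm : ∀ g : CliqueEdges he,
        w' g * Real.exp (lam * strength (cep he) w g)
          = w g * Real.exp (lam * strength (cep he) w g)
            + (if g = f'' then δ * Real.exp (lam * strength (cep he) w g) else 0)
            - (if g = f then δ * Real.exp (lam * strength (cep he) w g) else 0) := by
      intro g
      rw [hw'g g]
      split_ifs <;> ring
    rw [Finset.sum_congr rfl (fun g _ => hterm g), Finset.sum_sub_distrib,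
      Finset.sum_add_distrib,
      Finset.sum_ite_eq' univ f''
        (fun g : CliqueEdges he => δ * Real.exp (lam * strength (cep he) w g)),
      Finset.sum_ite_eq' univ f
        (fun g : CliqueEdges he => δ * Real.exp (lam * strength (cep he) w g)),
      if_pos (Finset.mem_univ _), if_pos (Finset.mem_univ _)]
    rfl
  rw [← hκ] at hΦ2
  -- conclude the numeric contradiction
  have hineq : δ * Real.exp (lam * strength (cep he) w f)
      ≤ δ * Real.exp (lam * κ) + N * B := by linarith
  have hdiv : Real.exp (lam * strength (cep he) w f)
      ≤ Real.exp (lam * κ) + N * lam * Real.exp (lam * (κ + δ)) := by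
    have hexpand : δ * (Real.exp (lam * κ) + N * lam * Real.exp (lam * (κ + δ)))
        = δ * Real.exp (lam * κ) + N * B := by rw [hB]; ring
    have h2 : δ * Real.exp (lam * strength (cep he) w f)
        ≤ δ * (Real.exp (lam * κ) + N * lam * Real.exp (lam * (κ + δ))) := by
      rw [hexpand]; exact hineq
    exact (mul_le_mul_iff_right₀ hδpos).1 h2
  have hsplit : Real.exp (lam * (κ + δ)) ≤ Real.exp (lam * κ) * Real.exp 1 := by
    rw [show lam * (κ + δ) = lam * κ + lam * δ by ring, Real.exp_add]
    exact mul_le_mul_of_nonneg_left (Real.exp_le_exp.2 hδlam) (Real.exp_pos _).le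
  have hup : Real.exp (lam * strength (cep he) w f)
      ≤ Real.exp (lam * κ) * (1 + N * Real.exp 1 * lam) := by
    have hstep : N * lam * Real.exp (lam * (κ + δ))
        ≤ N * lam * (Real.exp (lam * κ) * Real.exp 1) := by
      exact mul_le_mul_of_nonneg_left hsplit (mul_nonneg hN0 hlam0.le)
    calc Real.exp (lam * strength (cep he) w f)
        ≤ Real.exp (lam * κ) + N * lam * Real.exp (lam * (κ + δ)) := hdiv
      _ ≤ Real.exp (lam * κ) + N * lam * (Real.exp (lam * κ) * Real.exp 1) := by linarith
      _ = Real.exp (lam * κ) * (1 + N * Real.exp 1 * lam) := by ring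
  have hlow : Real.exp (lam * κ) * (1 + N * Real.exp 1 * lam)
      < Real.exp (lam * strength (cep he) w f) := by
    have h1 : lam * (κ + ε) < lam * strength (cep he) w f :=
      mul_lt_mul_of_pos_left hcon hlam0
    have h2 : Real.exp (lam * (κ + ε)) < Real.exp (lam * strength (cep he) w f) :=
      Real.exp_lt_exp.2 h1
    have h3 : Real.exp (lam * (κ + ε))
        = Real.exp (lam * κ) * (1 + N * Real.exp 1 * lam) := by
      rw [show lam * (κ + ε) = lam * κ + lam * ε by ring, Real.exp_add]
      congr 1
      rw [hε]
      rw [show lam * (Real.log (1 + N * Real.exp 1 * lam) / lam)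
          = Real.log (1 + N * Real.exp 1 * lam) by field_simp]
      exact Real.exp_log (by linarith)
    linarith
  linarith

end Bal

namespace Bal

variable {V E : Type} [Fintype V] [LinearOrder V] [Fintype E] (he : E → Finset V)

lemma AA_isCompact : IsCompact (AA he) := by
  have hsub : AA he ⊆ Set.Icc (0 : CliqueEdges he → ℝ) 1 := by
    intro w hw
    exact ⟨fun g => hw.1 g, fun g => mem_AA_le_one he hw g⟩
  have hclosed : IsClosed (AA he) := by
    have heq : AA he = (⋂ (f : CliqueEdges he), {w : CliqueEdges he → ℝ | 0 ≤ w f})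
        ∩ ⋂ (e : E), {w : CliqueEdges he → ℝ |
            (∑ f : CliqueEdges he, if f.1.1 = e then w f else 0) = 1} := by
      ext w
      simp only [AA, Set.mem_setOf_eq, Set.mem_inter_iff, Set.mem_iInter]
    rw [heq]
    refine IsClosed.inter (isClosed_iInter fun f => ?_) (isClosed_iInter fun e => ?_)
    · exact isClosed_le continuous_const (continuous_apply f)
    · refine isClosed_eq (continuous_finset_sum _ fun f _ => ?_) continuous_const
      split_ifs
      · exact continuous_apply f
      · exact continuous_const
  exact IsCompact.of_isClosed_subset isCompact_Icc hclosed hsub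

lemma AA_nonempty (hhe : ∀ e, 2 ≤ (he e).card) : (AA he).Nonempty := by
  refine ⟨fun f => ((Fe he f.1.1).card : ℝ)⁻¹, fun f => by positivity, fun e => ?_⟩
  rw [← Finset.sum_filter]
  have hcongr : ∀ f ∈ (univ : Finset (CliqueEdges he)).filter (fun f => f.1.1 = e),
      ((Fe he f.1.1).card : ℝ)⁻¹ = ((Fe he e).card : ℝ)⁻¹ := by
    intro f hf
    rw [Finset.mem_filter] at hf
    rw [hf.2]
  rw [Finset.sum_congr rfl hcongr]
  have hcard : ((Fe he e).card : ℝ) ≠ 0 := by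
    have := (Fe_nonempty he hhe e).card_pos
    positivity
  rw [Finset.sum_const]
  show ((Fe he e).card : ℕ) • ((Fe he e).card : ℝ)⁻¹ = 1
  rw [nsmul_eq_mul, mul_inv_cancel₀ hcard]

lemma eps_tendsto (C : ℝ) (hC : 0 ≤ C) :
    Filter.Tendsto (fun n : ℕ => Real.log (1 + C * ((n:ℝ)+1)^2) / ((n:ℝ)+1)^2)
      Filter.atTop (𝓝 0) := by
  have hbound : ∀ n : ℕ, Real.log (1 + C * ((n:ℝ)+1)^2) / ((n:ℝ)+1)^2
      ≤ (2 * Real.sqrt (1 + C)) * (1 / ((n:ℝ)+1)) := by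
    intro n
    have hn1 : (1:ℝ) ≤ ((n:ℝ)+1) := by
      have := Nat.cast_nonneg (α := ℝ) n; linarith
    have hn0 : (0:ℝ) < ((n:ℝ)+1) := by linarith
    have hsq1 : (1:ℝ) ≤ ((n:ℝ)+1)^2 := by nlinarith
    set x : ℝ := 1 + C * ((n:ℝ)+1)^2 with hx
    have hx1 : (1:ℝ) ≤ x := by rw [hx]; nlinarith
    have hx0 : (0:ℝ) < x := by linarith
    have hlog : Real.log x ≤ 2 * Real.sqrt x := by
      have h1 : Real.log (Real.sqrt x) = Real.log x / 2 := Real.log_sqrt hx0.le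
      have h2 : Real.log (Real.sqrt x) ≤ Real.sqrt x - 1 :=
        Real.log_le_sub_one_of_pos (Real.sqrt_pos.2 hx0)
      have h3 : (0:ℝ) ≤ Real.sqrt x := Real.sqrt_nonneg x
      linarith [h1 ▸ h2]
    have hmono : x ≤ (1 + C) * ((n:ℝ)+1)^2 := by rw [hx]; nlinarith
    have hsqrt : Real.sqrt x ≤ Real.sqrt (1 + C) * ((n:ℝ)+1) := by
      have h1 : Real.sqrt x ≤ Real.sqrt ((1 + C) * ((n:ℝ)+1)^2) := Real.sqrt_le_sqrt hmono
      rw [Real.sqrt_mul (by linarith) (((n:ℝ)+1)^2)] at h1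
      rw [Real.sqrt_sq (by linarith)] at h1
      exact h1
    have hlog2 : Real.log x ≤ 2 * Real.sqrt (1 + C) * ((n:ℝ)+1) := by nlinarith
    rw [div_le_iff₀ (by positivity)]
    calc Real.log x ≤ 2 * Real.sqrt (1 + C) * ((n:ℝ)+1) := hlog2
      _ = 2 * Real.sqrt (1 + C) * (1 / ((n:ℝ)+1)) * ((n:ℝ)+1)^2 := by
          field_simp
  have hnn : ∀ n : ℕ, 0 ≤ Real.log (1 + C * ((n:ℝ)+1)^2) / ((n:ℝ)+1)^2 := by
    intro n
    have : (1:ℝ) ≤ 1 + C * ((n:ℝ)+1)^2 := by nlinarith [hC, sq_nonneg ((n:ℝ)+1)]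
    exact div_nonneg (Real.log_nonneg this) (by positivity)
  refine squeeze_zero hnn hbound ?_
  have := tendsto_one_div_add_atTop_nhds_zero_nat.const_mul (2 * Real.sqrt (1 + C))
  rw [mul_zero] at this
  exact this

theorem stmt3' (hhe : ∀ e, 2 ≤ (he e).card) :
    ∃ w : CliqueEdges he → ℝ, (∀ f, 0 ≤ w f) ∧
      ∀ e : E, (∑ f : CliqueEdges he, if f.1.1 = e then w f else 0) = 1 ∧
        ∀ f : CliqueEdges he, f.1.1 = e → 0 < w f →
          strength (cep he) w f = kappa he w e := by
  classical
  have hcpt := AA_isCompact he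
  have hne := AA_nonempty he hhe
  set N : ℝ := (Fintype.card (CliqueEdges he) : ℝ) with hN
  set C : ℝ := N * Real.exp 1 with hC
  have hC0 : 0 ≤ C := by
    rw [hC, hN]
    positivity
  have hlam1 : ∀ n : ℕ, (1:ℝ) ≤ ((n:ℝ)+1)^2 := by
    intro n
    have := Nat.cast_nonneg (α := ℝ) n
    nlinarith
  have hminex : ∀ n : ℕ, ∃ w ∈ AA he,
      ∀ u ∈ AA he, Phi he ((((n:ℕ):ℝ)+1)^2) w ≤ Phi he ((((n:ℕ):ℝ)+1)^2) u := by
    intro n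
    obtain ⟨x, hx, hmin⟩ := hcpt.exists_isMinOn hne (continuous_Phi he ((((n:ℕ):ℝ)+1)^2)).continuousOn
    exact ⟨x, hx, fun u hu => hmin hu⟩
  choose ws hwsA hwsmin using hminex
  obtain ⟨wstar, hwstarA, φ, hφ, htend⟩ := hcpt.tendsto_subseq hwsA
  refine ⟨wstar, hwstarA.1, fun e => ⟨hwstarA.2 e, fun f hfe hwf => ?_⟩⟩
  subst hfe
  refine le_antisymm ?_ (kappa_le he wstar rfl)
  have hbound : ∀ n : ℕ, 0 < ws n f → strength (cep he) (ws n) f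
      ≤ kappa he (ws n) f.1.1 + Real.log (1 + C * (((n:ℕ):ℝ)+1)^2) / (((n:ℕ):ℝ)+1)^2 := by
    intro n h
    have := minimizer_bound he hhe (hlam1 n) (hwsA n) (hwsmin n) h
    rw [← hN, ← hC] at this
    exact this
  have htf : Filter.Tendsto (fun j => strength (cep he) (ws (φ j)) f)
      Filter.atTop (𝓝 (strength (cep he) wstar f)) :=
    ((continuous_strength he f).tendsto wstar).comp htend
  have htk : Filter.Tendsto (fun j => kappa he (ws (φ j)) f.1.1)
      Filter.atTop (𝓝 (kappa he wstar f.1.1)) :=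
    ((continuous_kappa he hhe f.1.1).tendsto wstar).comp htend
  have hεt : Filter.Tendsto (fun n : ℕ => Real.log (1 + C * (((n:ℕ):ℝ)+1)^2) / (((n:ℕ):ℝ)+1)^2)
      Filter.atTop (𝓝 0) := eps_tendsto C hC0
  have hεφ : Filter.Tendsto (fun j => Real.log (1 + C * (((φ j : ℕ):ℝ)+1)^2) / (((φ j : ℕ):ℝ)+1)^2)
      Filter.atTop (𝓝 0) := hεt.comp hφ.tendsto_atTop
  have hwtf : Filter.Tendsto (fun j => ws (φ j) f) Filter.atTop (𝓝 (wstar f)) :=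
    ((continuous_apply f).tendsto wstar).comp htend
  have hev0 : ∀ᶠ j in Filter.atTop, 0 < ws (φ j) f :=
    hwtf.eventually (lt_mem_nhds hwf)
  have hev : ∀ᶠ j in Filter.atTop, strength (cep he) (ws (φ j)) f
      ≤ kappa he (ws (φ j)) f.1.1 + Real.log (1 + C * (((φ j : ℕ):ℝ)+1)^2) / (((φ j : ℕ):ℝ)+1)^2 :=
    hev0.mono fun j hj => hbound (φ j) hj
  have := le_of_tendsto_of_tendsto htf (htk.add hεφ) hev
  simpa using this

end Bal

/-- Every unweighted finite multi-hypergraph all of whose hyperedges have at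
least 2 vertices admits a 1-balanced weight assignment: one in which the clique weights of each
hyperedge sum to 1 and every positive-weight edge of the clique `F_e` has strength exactly
`κ_e` in the induced auxiliary graph. -/
theorem stmt3 {V E : Type} [Fintype V] [LinearOrder V] [Fintype E]
    (he : E → Finset V) (hhe : ∀ e, 2 ≤ (he e).card) :
    ∃ w : CliqueEdges he → ℝ, (∀ f, 0 ≤ w f) ∧
      ∀ e : E, (∑ f : CliqueEdges he, if f.1.1 = e then w f else 0) = 1 ∧
        ∀ f : CliqueEdges he, f.1.1 = e → 0 < w f →
          strength (cep he) w f = kappa he w e := by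
  exact Bal.stmt3' he hhe
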